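/- Define x_i = f_{2i-1} + f_{2i} and y_i = f₁ + f₂ + ⋯ + f_{2i-1} in the 𝔽₂-vector space H spanned by f₁,…,f_{2g+1} with relation Σ fᵢ = 0, for i = 1,…,g. Let ψ : H^{⊗3} → 𝔽₂ be the linear map with ψ(f_i⊗f_j⊗f_k) = 1 iff exactly two of i,j,k are equal. Then: (a) ψ(z_i⊗z_j⊗z_k) = 0 whenever i, j, k are pairwise distinct and each z_l ∈ {x_l, y_l}; (b) for 2 ≤ k ≤ g-1 and i < k, ψ(x_i⊗y_i⊗y_k + x_{k+1}⊗y_{k+1}⊗y_k) = 1; (c) for i ≥ k+2, or k = 1, or k = g, or third factor x_k instead of y_k, ψ(x_i⊗y_i⊗z_k + x_{k+1}⊗y_{k+1}⊗z_k) = 0 (indices taken with i ≠ k, i ≠ k+1, subscripts mod g). -/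
import Mathlib


open Finset

/-- Exactly two of the three indices coincide. -/
def exactlyTwo {n : ℕ} (i j k : Fin n) : Prop :=
  (i = j ∧ i ≠ k) ∨ (i = k ∧ i ≠ j) ∨ (j = k ∧ i ≠ j)

instance {n : ℕ} (i j k : Fin n) : Decidable (exactlyTwo i j k) := by
  unfold exactlyTwo; infer_instance

/-- The trilinear form with `ψ(f_i⊗f_j⊗f_k) = 1` iff exactly two of `i, j, k` coincide. -/
def psi {n : ℕ} (x y z : Fin n → ZMod 2) : ZMod 2 :=
  ∑ i, ∑ j, ∑ k, if exactlyTwo i j k then x i * y j * z k else 0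

/-- The basis vector `f_m` (for `1 ≤ m ≤ 2g+1`) of the permutation module. -/
def fv (g m : ℕ) : Fin (2 * g + 1) → ZMod 2 :=
  fun a => if (a : ℕ) + 1 = m then 1 else 0

/-- `x_i = f_{2i-1} + f_{2i}`. -/
def xv (g i : ℕ) : Fin (2 * g + 1) → ZMod 2 := fv g (2 * i - 1) + fv g (2 * i)

/-- `y_i = f₁ + f₂ + ⋯ + f_{2i-1}`. -/
def yv (g i : ℕ) : Fin (2 * g + 1) → ZMod 2 := ∑ m ∈ Finset.Icc 1 (2 * i - 1), fv g m

lemma exactlyTwo_key {n : ℕ} (x y z : Fin n → ZMod 2) (i j k : Fin n) :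
    (if exactlyTwo i j k then x i * y j * z k else 0)
      = ((if i = j then x i * y j * z k else 0) + (if i = k then x i * y j * z k else 0)
        + (if j = k then x i * y j * z k else 0)) + (if i = j ∧ j = k then x i * y j * z k else 0) := by
  unfold exactlyTwo
  by_cases h1 : i = j <;> by_cases h2 : i = k <;> by_cases h3 : j = k <;>
    simp_all <;> simp [CharTwo.add_self_eq_zero]

lemma psi_eq {n : ℕ} (x y z : Fin n → ZMod 2) :
    psi x y z = (∑ a, x a * y a) * (∑ a, z a) + (∑ a, x a * z a) * (∑ a, y a)
      + (∑ a, y a * z a) * (∑ a, x a) + ∑ a, x a * y a * z a := by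
  have T1 : (∑ i, ∑ j, ∑ k : Fin n, if i = j then x i * y j * z k else 0)
      = (∑ a, x a * y a) * (∑ a, z a) := by
    rw [Finset.sum_mul]
    refine Finset.sum_congr rfl fun i _ => ?_
    calc ∑ j, ∑ k, (if i = j then x i * y j * z k else 0)
        = ∑ j, (if i = j then x i * y j * (∑ k, z k) else 0) := by
          refine Finset.sum_congr rfl fun j _ => ?_
          split_ifs with h
          · rw [Finset.mul_sum]
          · simp
      _ = x i * y i * ∑ k, z k := by rw [Finset.sum_ite_eq]; simp
  have T2 : (∑ i, ∑ j, ∑ k : Fin n, if i = k then x i * y j * z k else 0)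
      = (∑ a, x a * z a) * (∑ a, y a) := by
    rw [Finset.sum_mul]
    refine Finset.sum_congr rfl fun i _ => ?_
    calc ∑ j, ∑ k, (if i = k then x i * y j * z k else 0)
        = ∑ j, x i * y j * z i := by
          refine Finset.sum_congr rfl fun j _ => ?_
          rw [Finset.sum_ite_eq]; simp
      _ = x i * z i * ∑ a, y a := by
          rw [Finset.mul_sum]
          exact Finset.sum_congr rfl fun j _ => by ring
  have T3 : (∑ i, ∑ j, ∑ k : Fin n, if j = k then x i * y j * z k else 0)
      = (∑ a, y a * z a) * (∑ a, x a) := by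
    calc (∑ i, ∑ j, ∑ k : Fin n, if j = k then x i * y j * z k else 0)
        = ∑ i, ∑ j, x i * y j * z j := by
          refine Finset.sum_congr rfl fun i _ => Finset.sum_congr rfl fun j _ => ?_
          rw [Finset.sum_ite_eq]; simp
      _ = ∑ i, x i * ∑ a, y a * z a := by
          refine Finset.sum_congr rfl fun i _ => ?_
          rw [Finset.mul_sum]
          exact Finset.sum_congr rfl fun j _ => by ring
      _ = (∑ a, y a * z a) * (∑ a, x a) := by rw [← Finset.sum_mul]; ring
  have T4 : (∑ i, ∑ j, ∑ k : Fin n, if i = j ∧ j = k then x i * y j * z k else 0)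
      = ∑ a, x a * y a * z a := by
    refine Finset.sum_congr rfl fun i _ => ?_
    calc ∑ j, ∑ k, (if i = j ∧ j = k then x i * y j * z k else 0)
        = ∑ j, (if i = j then x i * y j * z j else 0) := by
          refine Finset.sum_congr rfl fun j _ => ?_
          simp_rw [ite_and]
          split_ifs with h
          · rw [Finset.sum_ite_eq]; simp
          · simp
      _ = x i * y i * z i := by rw [Finset.sum_ite_eq]; simp
  unfold psi
  simp_rw [exactlyTwo_key x y z, Finset.sum_add_distrib]
  rw [T1, T2, T3, T4]

lemma psi_swap12 {n : ℕ} (x y z : Fin n → ZMod 2) : psi x y z = psi y x z := by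
  rw [psi_eq, psi_eq]
  have h1 : (∑ a, y a * x a) = ∑ a, x a * y a := Finset.sum_congr rfl fun a _ => by ring
  have h2 : (∑ a, y a * x a * z a) = ∑ a, x a * y a * z a :=
    Finset.sum_congr rfl fun a _ => by ring
  rw [h1, h2]; ring

lemma psi_swap23 {n : ℕ} (x y z : Fin n → ZMod 2) : psi x y z = psi x z y := by
  rw [psi_eq, psi_eq]
  have h1 : (∑ a, z a * y a) = ∑ a, y a * z a := Finset.sum_congr rfl fun a _ => by ring
  have h2 : (∑ a, x a * z a * y a) = ∑ a, x a * y a * z a :=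
    Finset.sum_congr rfl fun a _ => by ring
  rw [h1, h2]; ring

lemma psi_swap13 {n : ℕ} (x y z : Fin n → ZMod 2) : psi x y z = psi z y x := by
  rw [psi_swap12, psi_swap23, psi_swap12]

lemma val_mk' {n m : ℕ} (h : m < n) : ((⟨m, h⟩ : Fin n) : ℕ) = m := rfl

lemma yv_apply (g j : ℕ) (a : Fin (2 * g + 1)) :
    yv g j a = if (a : ℕ) < 2 * j - 1 then 1 else 0 := by
  unfold yv fv
  rw [Finset.sum_apply]
  rw [Finset.sum_ite_eq (Finset.Icc 1 (2 * j - 1)) ((a : ℕ) + 1) (fun _ => (1 : ZMod 2))]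
  simp only [Finset.mem_Icc]
  exact if_congr (by omega) rfl rfl

lemma xv_apply (g j : ℕ) (a : Fin (2 * g + 1)) :
    xv g j a = if ((a : ℕ) + 1 = 2 * j - 1 ∨ (a : ℕ) + 1 = 2 * j) then 1 else 0 := by
  simp only [xv, fv, Pi.add_apply]
  by_cases h1 : (a : ℕ) + 1 = 2 * j - 1 <;> by_cases h2 : (a : ℕ) + 1 = 2 * j <;>
    first
      | (exfalso; omega)
      | (simp [h1, h2]; omega)
      | simp [h1, h2]

lemma sum_xv (g i : ℕ) (hi : 1 ≤ i) (hig : i ≤ g) (w : Fin (2 * g + 1) → ZMod 2) :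
    ∑ a, xv g i a * w a
      = w ⟨2 * i - 2, by omega⟩ + w ⟨2 * i - 1, by omega⟩ := by
  have key : ∀ a : Fin (2 * g + 1), xv g i a * w a
      = (if (⟨2 * i - 2, by omega⟩ : Fin (2 * g + 1)) = a then w a else 0)
        + (if (⟨2 * i - 1, by omega⟩ : Fin (2 * g + 1)) = a then w a else 0) := by
    intro a
    have ha := a.isLt
    have c1 : ((a : ℕ) + 1 = 2 * i - 1) ↔ ((⟨2 * i - 2, by omega⟩ : Fin (2 * g + 1)) = a) := by
      rw [Fin.ext_iff]; simp only [Fin.val_mk]; omega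
    have c2 : ((a : ℕ) + 1 = 2 * i) ↔ ((⟨2 * i - 1, by omega⟩ : Fin (2 * g + 1)) = a) := by
      rw [Fin.ext_iff]; simp only [Fin.val_mk]; omega
    show ((if (a : ℕ) + 1 = 2 * i - 1 then (1 : ZMod 2) else 0)
        + (if (a : ℕ) + 1 = 2 * i then 1 else 0)) * w a = _
    rw [add_mul, ite_mul, ite_mul, one_mul, zero_mul, if_congr c1 rfl rfl, if_congr c2 rfl rfl]
  rw [Finset.sum_congr rfl fun a _ => key a, Finset.sum_add_distrib,
    Finset.sum_ite_eq Finset.univ _ w, Finset.sum_ite_eq Finset.univ _ w]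
  simp

lemma count (g t : ℕ) (ht : t ≤ 2 * g + 1) :
    ∑ a : Fin (2 * g + 1), (if (a : ℕ) < t then (1 : ZMod 2) else 0) = (t : ZMod 2) := by
  rw [Fin.sum_univ_eq_sum_range (fun a => if a < t then (1 : ZMod 2) else 0)]
  have h : ∀ a ∈ Finset.range (2 * g + 1),
      (if a < t then (1 : ZMod 2) else 0) = if a ∈ Finset.range t then 1 else 0 := by
    intro a _; simp [Finset.mem_range]
  rw [Finset.sum_congr rfl h, Finset.sum_ite_mem,
    Finset.inter_eq_right.mpr (Finset.range_subset_range.mpr ht)]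
  simp

lemma odd_cast (m : ℕ) (hm : 1 ≤ m) : ((2 * m - 1 : ℕ) : ZMod 2) = 1 := by
  have h : 2 * m - 1 = 2 * (m - 1) + 1 := by omega
  rw [h]; push_cast
  rw [show ((2 : ZMod 2)) = 0 by decide, zero_mul, zero_add]

lemma tot_x (g i : ℕ) (hi : 1 ≤ i) (hig : i ≤ g) : ∑ a, xv g i a = 0 := by
  calc ∑ a, xv g i a = ∑ a, xv g i a * (fun _ => (1 : ZMod 2)) a := by simp
    _ = 1 + 1 := sum_xv g i hi hig _
    _ = 0 := by decide

lemma tot_y (g i : ℕ) (hi : 1 ≤ i) (hig : i ≤ g) : ∑ a, yv g i a = 1 := by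
  simp_rw [yv_apply]
  rw [count g (2 * i - 1) (by omega), odd_cast i hi]

lemma dot_yy (g i j : ℕ) (hi : 1 ≤ i) (hig : i ≤ g) (hj : 1 ≤ j) (hjg : j ≤ g) :
    ∑ a, yv g i a * yv g j a = 1 := by
  simp_rw [yv_apply]
  have h : ∀ a : Fin (2 * g + 1),
      (if (a : ℕ) < 2 * i - 1 then (1 : ZMod 2) else 0) * (if (a : ℕ) < 2 * j - 1 then 1 else 0)
        = if (a : ℕ) < 2 * (min i j) - 1 then 1 else 0 := by
    intro a; split_ifs <;> first | decide | (exfalso; omega)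
  rw [Finset.sum_congr rfl fun a _ => h a, count g _ (by omega), odd_cast _ (by omega)]

lemma tri_yyy (g i j k : ℕ) (hi : 1 ≤ i) (hig : i ≤ g) (hj : 1 ≤ j) (hjg : j ≤ g)
    (hk : 1 ≤ k) (hkg : k ≤ g) :
    ∑ a, yv g i a * yv g j a * yv g k a = 1 := by
  simp_rw [yv_apply]
  have h : ∀ a : Fin (2 * g + 1),
      (if (a : ℕ) < 2 * i - 1 then (1 : ZMod 2) else 0) * (if (a : ℕ) < 2 * j - 1 then 1 else 0)
          * (if (a : ℕ) < 2 * k - 1 then 1 else 0)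
        = if (a : ℕ) < 2 * (min i (min j k)) - 1 then 1 else 0 := by
    intro a; split_ifs <;> first | decide | (exfalso; omega)
  rw [Finset.sum_congr rfl fun a _ => h a, count g _ (by omega), odd_cast _ (by omega)]

lemma psi_yyy (g i j k : ℕ) (hi : 1 ≤ i) (hig : i ≤ g) (hj : 1 ≤ j) (hjg : j ≤ g)
    (hk : 1 ≤ k) (hkg : k ≤ g) :
    psi (yv g i) (yv g j) (yv g k) = 0 := by
  rw [psi_eq, dot_yy g i j hi hig hj hjg, dot_yy g i k hi hig hk hkg,
    dot_yy g j k hj hjg hk hkg, tot_y g i hi hig, tot_y g j hj hjg, tot_y g k hk hkg,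
    tri_yyy g i j k hi hig hj hjg hk hkg]
  decide

lemma psi_xyy (g i j k : ℕ) (hi : 1 ≤ i) (hig : i ≤ g) (hj : 1 ≤ j) (hjg : j ≤ g)
    (hk : 1 ≤ k) (hkg : k ≤ g) :
    psi (xv g i) (yv g j) (yv g k)
      = (if i = j then 1 else 0) + (if i = k then 1 else 0)
        + (if i = min j k then 1 else 0) := by
  rw [psi_eq, tot_y g k hk hkg, tot_y g j hj hjg, tot_x g i hi hig]
  rw [sum_xv g i hi hig (yv g j), sum_xv g i hi hig (yv g k)]
  have htri : ∑ a, xv g i a * yv g j a * yv g k a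
      = ∑ a, xv g i a * (yv g j a * yv g k a) := Finset.sum_congr rfl fun a _ => by ring
  rw [htri, sum_xv g i hi hig]
  simp only [yv_apply, Fin.val_mk, mul_one, mul_zero, add_zero]
  split_ifs <;> first | decide | (exfalso; omega)

lemma psi_xxy (g i j k : ℕ) (hi : 1 ≤ i) (hig : i ≤ g) (hj : 1 ≤ j) (hjg : j ≤ g)
    (hk : 1 ≤ k) (hkg : k ≤ g) :
    psi (xv g i) (xv g j) (yv g k) = if i = j ∧ i = k then 1 else 0 := by
  rw [psi_eq, tot_y g k hk hkg, tot_x g j hj hjg, tot_x g i hi hig]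
  have htri : ∑ a, xv g i a * xv g j a * yv g k a
      = ∑ a, xv g i a * (xv g j a * yv g k a) := Finset.sum_congr rfl fun a _ => by ring
  rw [sum_xv g i hi hig (xv g j), sum_xv g i hi hig (yv g k), sum_xv g j hj hjg (yv g k),
    htri, sum_xv g i hi hig (fun a => xv g j a * yv g k a)]
  simp only [xv_apply, yv_apply, Fin.val_mk, mul_one, mul_zero, add_zero, zero_add]
  split_ifs <;> first | decide | (exfalso; omega)

lemma psi_xxx (g i j k : ℕ) (hi : 1 ≤ i) (hig : i ≤ g) (hj : 1 ≤ j) (hjg : j ≤ g)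
    (hk : 1 ≤ k) (hkg : k ≤ g) :
    psi (xv g i) (xv g j) (xv g k) = 0 := by
  rw [psi_eq, tot_x g i hi hig, tot_x g j hj hjg, tot_x g k hk hkg]
  have htri : ∑ a, xv g i a * xv g j a * xv g k a
      = ∑ a, xv g i a * (xv g j a * xv g k a) := Finset.sum_congr rfl fun a _ => by ring
  rw [sum_xv g i hi hig (xv g j), sum_xv g i hi hig (xv g k), sum_xv g j hj hjg (xv g k),
    htri, sum_xv g i hi hig (fun a => xv g j a * xv g k a)]
  simp only [xv_apply, Fin.val_mk, mul_zero, zero_add, add_zero, mul_one]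
  split_ifs <;> first | decide | (exfalso; omega)

/-- Values of `ψ` on the symplectic basis elements, recovering the harmonic volume of a
hyperelliptic curve: (a) pairwise-distinct indices give `0`; (b) for `2 ≤ k ≤ g-1` and
`i < k`, `ψ(x_i⊗y_i⊗y_k + x_{k+1}⊗y_{k+1}⊗y_k) = 1`; (c) for `i ≥ k+2`, or `k = 1`, or
`k = g`, or third factor `x_k`, the corresponding value is `0` (subscripts mod `g`, with
`i ≠ k`, `i ≠ k+1`). -/
theorem stmt12 (g : ℕ) (hg : 3 ≤ g) :
    (∀ i j k : ℕ, 1 ≤ i → i ≤ g → 1 ≤ j → j ≤ g → 1 ≤ k → k ≤ g →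
      i ≠ j → j ≠ k → i ≠ k →
      ∀ zi zj zk : Fin (2 * g + 1) → ZMod 2,
        (zi = xv g i ∨ zi = yv g i) → (zj = xv g j ∨ zj = yv g j) →
        (zk = xv g k ∨ zk = yv g k) → psi zi zj zk = 0) ∧
    (∀ i k : ℕ, 2 ≤ k → k ≤ g - 1 → 1 ≤ i → i < k →
      psi (xv g i) (yv g i) (yv g k) + psi (xv g (k + 1)) (yv g (k + 1)) (yv g k) = 1) ∧
    (∀ i k : ℕ, 1 ≤ i → i ≤ g → 1 ≤ k → k ≤ g → i ≠ k → i ≠ k % g + 1 →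
      ((k + 2 ≤ i ∨ k = 1 ∨ k = g) →
        psi (xv g i) (yv g i) (yv g k)
          + psi (xv g (k % g + 1)) (yv g (k % g + 1)) (yv g k) = 0) ∧
      (psi (xv g i) (yv g i) (xv g k)
          + psi (xv g (k % g + 1)) (yv g (k % g + 1)) (xv g k) = 0)) := by
  refine ⟨?_, ?_, ?_⟩
  · -- part (a)
    intro i j k hi hig hj hjg hk hkg hij hjk hik zi zj zk hzi hzj hzk
    rcases hzi with rfl | rfl <;> rcases hzj with rfl | rfl <;> rcases hzk with rfl | rfl
    · exact psi_xxx g i j k hi hig hj hjg hk hkg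
    · rw [psi_xxy g i j k hi hig hj hjg hk hkg, if_neg (by tauto)]
    · rw [psi_swap23, psi_xxy g i k j hi hig hk hkg hj hjg, if_neg (by tauto)]
    · rw [psi_xyy g i j k hi hig hj hjg hk hkg]
      split_ifs <;> first | decide | (exfalso; omega)
    · rw [psi_swap12, psi_swap23, psi_xxy g j k i hj hjg hk hkg hi hig, if_neg (by tauto)]
    · rw [psi_swap12, psi_xyy g j i k hj hjg hi hig hk hkg]
      split_ifs <;> first | decide | (exfalso; omega)
    · rw [psi_swap13, psi_xyy g k j i hk hkg hj hjg hi hig]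
      split_ifs <;> first | decide | (exfalso; omega)
    · exact psi_yyy g i j k hi hig hj hjg hk hkg
  · -- part (b)
    intro i k hk2 hkg hi hik
    rw [psi_xyy g i i k hi (by omega) hi (by omega) (by omega) (by omega),
      psi_xyy g (k+1) (k+1) k (by omega) (by omega) (by omega) (by omega) (by omega) (by omega)]
    split_ifs <;> first | decide | (exfalso; omega)
  · -- part (c)
    intro i k hi hig hk hkg hik hik'
    rcases Nat.lt_or_ge k g with hlt | hge
    · have hmod : k % g = k := Nat.mod_eq_of_lt hlt
      rw [hmod] at hik' ⊢
      constructor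
      · rintro (hcase | hcase | hcase)
        · rw [psi_xyy g i i k hi hig hi hig hk hkg,
            psi_xyy g (k+1) (k+1) k (by omega) (by omega) (by omega) (by omega) hk hkg]
          split_ifs <;> first | decide | (exfalso; omega)
        · rw [psi_xyy g i i k hi hig hi hig hk hkg,
            psi_xyy g (k+1) (k+1) k (by omega) (by omega) (by omega) (by omega) hk hkg]
          split_ifs <;> first | decide | (exfalso; omega)
        · omega
      · rw [psi_swap23 (xv g i), psi_swap23 (xv g (k+1)),
          psi_xxy g i k i hi hig hk hkg hi hig,
          psi_xxy g (k+1) k (k+1) (by omega) (by omega) hk hkg (by omega) (by omega)]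
        split_ifs <;> first | decide | (exfalso; omega)
    · have hkeq : k = g := by omega
      have hmod : k % g = 0 := by rw [hkeq]; exact Nat.mod_self g
      rw [hmod, Nat.zero_add] at hik' ⊢
      constructor
      · intro _
        rw [psi_xyy g i i k hi hig hi hig hk hkg,
          psi_xyy g 1 1 k (by omega) (by omega) (by omega) (by omega) hk hkg]
        split_ifs <;> first | decide | (exfalso; omega)
      · rw [psi_swap23 (xv g i), psi_swap23 (xv g 1),
          psi_xxy g i k i hi hig hk hkg hi hig,
          psi_xxy g 1 k 1 (by omega) (by omega) hk hkg (by omega) (by omega)]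
        split_ifs <;> first | decide | (exfalso; omega)
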